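/- Let Φ: V → M be a holomorphic (or real-analytic/smooth) matrix-valued map on a neighborhood V of 0 in C^N, with block components Φ^{(α,β)}. Suppose Φ^{(α,α)} ≡ I, Φ^{(α,β)}(0) = 0 for α > β, and the derivative identity ∂Φ^{(α,β)}/∂z_μ = Φ^{(α,β+1)} · ∂Φ^{(β+1,β)}/∂z_μ holds for all 0 ≤ β < α ≤ n and 1 ≤ μ ≤ N. Then Φ^{(α,β)}(z) = O(|z|^{α−β}) as z → 0, for all 0 ≤ β ≤ α ≤ n. -/

import Mathlib

open Asymptotics

/-- If the blocks of a holomorphic matrix-valued map `Φ` on a neighborhood `V` of `0`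
in `ℂ^N` satisfy `Φ^{(α,α)} ≡ I`, `Φ^{(α,β)}(0) = 0` for `α > β`, and the Griffiths
transversality derivative identity
`∂Φ^{(α,β)}/∂z_μ = Φ^{(α,β+1)} · ∂Φ^{(β+1,β)}/∂z_μ`,
then `Φ^{(α,β)}(z) = O(|z|^{α−β})` as `z → 0`, for all `0 ≤ β ≤ α ≤ n`. -/
theorem block_vanishing_order
    (N n m : ℕ) (V : Set (Fin N → ℂ)) (hV : IsOpen V) (h0 : (0 : Fin N → ℂ) ∈ V)
    (Φ : ℕ → ℕ → ((Fin N → ℂ) → Matrix (Fin m) (Fin m) ℂ))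
    (hdiff : ∀ α β, α ≤ n → β ≤ n → ∀ i j,
      DifferentiableOn ℂ (fun z => Φ α β z i j) V)
    (hdiag : ∀ α, α ≤ n → ∀ z ∈ V, Φ α α z = 1)
    (hzero : ∀ α β, β < α → α ≤ n → Φ α β 0 = 0)
    (hderiv : ∀ α β, β < α → α ≤ n → ∀ μ : Fin N, ∀ z ∈ V, ∀ i j,
      fderiv ℂ (fun w => Φ α β w i j) z (Pi.single μ 1) =
        ∑ l, Φ α (β + 1) z i l * fderiv ℂ (fun w => Φ (β + 1) β w l j) z (Pi.single μ 1)) :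
    ∀ α β, β ≤ α → α ≤ n → ∀ i j,
      (fun z => Φ α β z i j) =O[nhds (0 : Fin N → ℂ)] (fun z => ‖z‖ ^ (α - β)) := by
  -- choose a closed ball inside V
  obtain ⟨r, hr, hball⟩ := Metric.isOpen_iff.mp hV 0 h0
  set R : ℝ := r / 2 with hRdef
  have hR0 : 0 < R := by positivity
  have hsub : Metric.closedBall (0 : Fin N → ℂ) R ⊆ V := by
    intro w hw
    apply hball
    rw [Metric.mem_closedBall] at hw
    rw [Metric.mem_ball]
    have : R < r := by rw [hRdef]; linarith
    linarith
  have hmemV : ∀ w : Fin N → ℂ, ‖w‖ ≤ R → w ∈ V := by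
    intro w hw
    exact hsub (by rwa [Metric.mem_closedBall, dist_zero_right])
  -- the key quantitative bound, by induction on k = α - β
  have key : ∀ k, ∀ α β, β ≤ α → α ≤ n → α - β = k → ∃ C : ℝ, 0 ≤ C ∧
      ∀ z : Fin N → ℂ, ‖z‖ ≤ R / 2 → ∀ i j, ‖Φ α β z i j‖ ≤ C * ‖z‖ ^ k := by
    intro k
    induction k with
    | zero =>
      intro α β hβα hαn hk
      have hαβ : α = β := le_antisymm (Nat.le_of_sub_eq_zero hk) hβα
      subst hαβ
      refine ⟨1, zero_le_one, fun z hz i j => ?_⟩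
      have hzV : z ∈ V := hmemV z (by linarith)
      rw [hdiag α hαn z hzV]
      rw [Matrix.one_apply]
      split_ifs <;> simp
    | succ k ih =>
      intro α β hβα hαn hk
      have hβα' : β < α := by omega
      have hβ1α : β + 1 ≤ α := hβα'
      have hβ1n : β + 1 ≤ n := le_trans hβ1α hαn
      have hβn : β ≤ n := le_trans (le_of_lt hβα') hαn
      obtain ⟨C, hC0, hCb⟩ := ih α (β + 1) hβ1α hαn (by omega)
      -- bound M on the entries of Φ (β+1) β on the closed ball of radius R
      have hcont : ContinuousOn
          (fun w => ∑ l : Fin m, ∑ j' : Fin m, ‖Φ (β + 1) β w l j'‖)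
          (Metric.closedBall (0 : Fin N → ℂ) R) := by
        apply ContinuousOn.mono _ hsub
        exact continuousOn_finset_sum _ fun l _ =>
          continuousOn_finset_sum _ fun j' _ =>
            (hdiff (β + 1) β hβ1n hβn l j').continuousOn.norm
      obtain ⟨M, hM⟩ :=
        (isCompact_closedBall (0 : Fin N → ℂ) R).exists_bound_of_continuousOn hcont
      have MB : ∀ w : Fin N → ℂ, ‖w‖ ≤ R → ∀ l j' : Fin m, ‖Φ (β + 1) β w l j'‖ ≤ M := by
        intro w hw l j'
        have hwmem : w ∈ Metric.closedBall (0 : Fin N → ℂ) R := by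
          rwa [Metric.mem_closedBall, dist_zero_right]
        have h1 := hM w hwmem
        have h2 : ‖Φ (β + 1) β w l j'‖ ≤ ∑ l' : Fin m, ∑ j'' : Fin m, ‖Φ (β + 1) β w l' j''‖ := by
          calc ‖Φ (β + 1) β w l j'‖ ≤ ∑ j'' : Fin m, ‖Φ (β + 1) β w l j''‖ :=
                Finset.single_le_sum (fun _ _ => norm_nonneg _) (Finset.mem_univ j')
            _ ≤ ∑ l' : Fin m, ∑ j'' : Fin m, ‖Φ (β + 1) β w l' j''‖ :=
                Finset.single_le_sum
                  (fun l' _ => Finset.sum_nonneg fun _ _ => norm_nonneg _) (Finset.mem_univ l)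
        exact h2.trans (le_trans (le_abs_self _) h1)
      have hM0 : 0 ≤ M := by
        have := hM 0 (by simp [hR0.le])
        exact le_trans (norm_nonneg _) this
      -- Cauchy/Schwarz estimate: partial derivatives of Φ (β+1) β are bounded on the half ball
      set D : ℝ := (2 * M + 1) / (R / 2) with hDdef
      have hD0 : 0 ≤ D := by positivity
      have hDer : ∀ w : Fin N → ℂ, ‖w‖ ≤ R / 2 → ∀ μ : Fin N, ∀ l j' : Fin m,
          ‖fderiv ℂ (fun x => Φ (β + 1) β x l j') w (Pi.single μ 1)‖ ≤ D := by
        intro w hw μ l j'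
        set g : (Fin N → ℂ) → ℂ := fun x => Φ (β + 1) β x l j' with hg
        set e : Fin N → ℂ := Pi.single μ 1 with he
        have hne : ‖e‖ ≤ 1 := by
          rw [he, pi_norm_le_iff_of_nonneg zero_le_one]
          intro i'
          rw [Pi.single_apply]
          split_ifs <;> simp
        have hmem : ∀ ζ : ℂ, ζ ∈ Metric.ball (0 : ℂ) (R / 2) → ‖w + ζ • e‖ ≤ R := by
          intro ζ hζ
          rw [Metric.mem_ball, dist_zero_right] at hζ
          calc ‖w + ζ • e‖ ≤ ‖w‖ + ‖ζ • e‖ := norm_add_le _ _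
            _ = ‖w‖ + ‖ζ‖ * ‖e‖ := by rw [norm_smul]
            _ ≤ R / 2 + R / 2 * 1 := by
                apply add_le_add hw
                apply mul_le_mul hζ.le hne (norm_nonneg _) (by linarith)
            _ = R := by ring
        set φ : ℂ → ℂ := fun ζ => g (w + ζ • e) with hφ
        have hφd : DifferentiableOn ℂ φ (Metric.ball (0 : ℂ) (R / 2)) := by
          intro ζ hζ
          apply DifferentiableAt.differentiableWithinAt
          have h1 : DifferentiableAt ℂ g (w + ζ • e) :=
            (hdiff (β + 1) β hβ1n hβn l j').differentiableAt
              (hV.mem_nhds (hmemV _ (hmem ζ hζ)))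
          exact h1.comp ζ (f := fun ζ : ℂ => w + ζ • e) (by fun_prop)
        have hmaps : Set.MapsTo φ (Metric.ball (0 : ℂ) (R / 2))
            (Metric.ball (φ 0) (2 * M + 1)) := by
          intro ζ hζ
          have h1 : ‖φ ζ‖ ≤ M := MB _ (hmem ζ hζ) l j'
          have h2 : ‖φ 0‖ ≤ M :=
            MB (w + (0 : ℂ) • e) (by simp; linarith) l j'
          rw [Metric.mem_ball, dist_eq_norm]
          calc ‖φ ζ - φ 0‖ ≤ ‖φ ζ‖ + ‖φ 0‖ := norm_sub_le _ _
            _ < 2 * M + 1 := by linarith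
        have hwV : w ∈ V := hmemV w (by linarith)
        have hgd : HasFDerivAt g (fderiv ℂ g w) w :=
          ((hdiff (β + 1) β hβ1n hβn l j').differentiableAt
            (hV.mem_nhds hwV)).hasFDerivAt
        have hder0 : HasDerivAt φ (fderiv ℂ g w e) 0 := by
          have hl : HasDerivAt (fun ζ : ℂ => w + ζ • e) e 0 := by
            simpa using ((hasDerivAt_id (0 : ℂ)).smul_const e).const_add w
          have h00 : w + (0 : ℂ) • e = w := by simp
          have hgd' : HasFDerivAt g (fderiv ℂ g w) ((fun ζ : ℂ => w + ζ • e) 0) := by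
            simpa [h00] using hgd
          exact hgd'.comp_hasDerivAt 0 hl
        calc ‖fderiv ℂ g w e‖ = ‖deriv φ 0‖ := by rw [hder0.deriv]
          _ ≤ (2 * M + 1) / (R / 2) :=
              Complex.norm_deriv_le_div_of_mapsTo_ball hφd (hmaps.mono_right Metric.ball_subset_closedBall) (by positivity)
      -- main estimate via the mean value inequality
      refine ⟨N * m * C * D, by positivity, fun z hz i j => ?_⟩
      set f : (Fin N → ℂ) → ℂ := fun x => Φ α β x i j with hf
      have hbound : ∀ w ∈ Metric.closedBall (0 : Fin N → ℂ) ‖z‖,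
          ‖fderiv ℂ f w‖ ≤ N * m * C * D * ‖z‖ ^ k := by
        intro w hw
        rw [Metric.mem_closedBall, dist_zero_right] at hw
        have hwR2 : ‖w‖ ≤ R / 2 := le_trans hw hz
        have hwV : w ∈ V := hmemV w (by linarith)
        apply ContinuousLinearMap.opNorm_le_bound _ (by positivity)
        intro v
        have hone : ∀ μ : Fin N,
            ‖fderiv ℂ f w (Pi.single μ 1)‖ ≤ m * C * D * ‖z‖ ^ k := by
          intro μ
          rw [hf]
          rw [hderiv α β hβα' hαn μ w hwV i j]
          have hwk : ‖w‖ ^ k ≤ ‖z‖ ^ k := pow_le_pow_left₀ (norm_nonneg _) hw k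
          calc ‖∑ l, Φ α (β + 1) w i l *
                  fderiv ℂ (fun x => Φ (β + 1) β x l j) w (Pi.single μ 1)‖
              ≤ ∑ l : Fin m, ‖Φ α (β + 1) w i l *
                  fderiv ℂ (fun x => Φ (β + 1) β x l j) w (Pi.single μ 1)‖ :=
                norm_sum_le _ _
            _ ≤ ∑ _l : Fin m, C * ‖z‖ ^ k * D := by
                apply Finset.sum_le_sum
                intro l _
                rw [norm_mul]
                have h1 : ‖Φ α (β + 1) w i l‖ ≤ C * ‖z‖ ^ k := by
                  calc ‖Φ α (β + 1) w i l‖ ≤ C * ‖w‖ ^ k := hCb w hwR2 i l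
                    _ ≤ C * ‖z‖ ^ k := by
                        apply mul_le_mul_of_nonneg_left hwk hC0
                exact mul_le_mul h1 (hDer w hwR2 μ l j) (norm_nonneg _) (by positivity)
            _ = m * C * D * ‖z‖ ^ k := by
                rw [Finset.sum_const, Finset.card_univ, Fintype.card_fin, nsmul_eq_mul]
                ring
        have hvdec : v = ∑ μ : Fin N, v μ • (Pi.single μ (1 : ℂ) : Fin N → ℂ) := by
          ext x
          rw [Finset.sum_apply]
          simp [Pi.single_apply]
        calc ‖fderiv ℂ f w v‖
            = ‖∑ μ : Fin N, v μ • fderiv ℂ f w (Pi.single μ 1)‖ := by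
              conv_lhs => rw [hvdec]
              rw [map_sum]
              simp only [map_smul]
          _ ≤ ∑ μ : Fin N, ‖v μ • fderiv ℂ f w (Pi.single μ 1)‖ := norm_sum_le _ _
          _ ≤ ∑ _μ : Fin N, ‖v‖ * (m * C * D * ‖z‖ ^ k) := by
              apply Finset.sum_le_sum
              intro μ _
              rw [norm_smul]
              exact mul_le_mul (norm_le_pi_norm v μ) (hone μ) (norm_nonneg _) (norm_nonneg _)
          _ = N * m * C * D * ‖z‖ ^ k * ‖v‖ := by
              rw [Finset.sum_const, Finset.card_univ, Fintype.card_fin, nsmul_eq_mul]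
              ring
      have hdiffAt : ∀ w ∈ Metric.closedBall (0 : Fin N → ℂ) ‖z‖, DifferentiableAt ℂ f w := by
        intro w hw
        rw [Metric.mem_closedBall, dist_zero_right] at hw
        have hwV : w ∈ V := hmemV w (by linarith [le_trans hw hz])
        exact (hdiff α β hαn hβn i j).differentiableAt (hV.mem_nhds hwV)
      have hmv := (convex_closedBall (0 : Fin N → ℂ) ‖z‖).norm_image_sub_le_of_norm_fderiv_le
        hdiffAt hbound
        (show (0 : Fin N → ℂ) ∈ Metric.closedBall (0 : Fin N → ℂ) ‖z‖ from
          Metric.mem_closedBall_self (norm_nonneg z))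
        (show z ∈ Metric.closedBall (0 : Fin N → ℂ) ‖z‖ by
          rw [Metric.mem_closedBall, dist_zero_right])
      have hf0 : f 0 = 0 := by
        rw [hf]
        simp [hzero α β hβα' hαn]
      calc ‖Φ α β z i j‖ = ‖f z - f 0‖ := by rw [hf0, sub_zero]
        _ ≤ N * m * C * D * ‖z‖ ^ k * ‖z - 0‖ := by
            simpa using hmv
        _ = N * m * C * D * ‖z‖ ^ (k + 1) := by
            rw [sub_zero, pow_succ]
            ring
  -- conclude the asymptotic statement
  intro α β hβα hαn i j
  obtain ⟨C, hC0, hCb⟩ := key (α - β) α β hβα hαn rfl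
  rw [isBigO_iff]
  refine ⟨C, ?_⟩
  have hmem : Metric.closedBall (0 : Fin N → ℂ) (R / 2) ∈ nhds (0 : Fin N → ℂ) :=
    Metric.closedBall_mem_nhds _ (by positivity)
  filter_upwards [hmem] with z hz
  rw [Metric.mem_closedBall, dist_zero_right] at hz
  have := hCb z hz i j
  calc ‖Φ α β z i j‖ ≤ C * ‖z‖ ^ (α - β) := this
    _ = C * ‖‖z‖ ^ (α - β)‖ := by
        rw [norm_pow, norm_norm]
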